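/- Let μ > 0, let K be a continuous, even, 2π-periodic kernel with continuous derivative on (0,π), and let φ be an even, 2π-periodic C¹ function with zero mean, nondecreasing on (-π, 0), satisfying (μ - φ(x))·φ'(x) = (K * φ')(x) for all x, where K' < 0 and φ' ≥ 0 on (0, π) and φ is nontrivial. Then φ'(x) > 0 for all x ∈ (-π, 0). -/

import Mathlib

open Real

lemma aux_integral_pos {g : ℝ → ℝ} {a b y₀ : ℝ} (hg : Continuous g)
    (h0 : ∀ y ∈ Set.Icc a b, 0 ≤ g y) (hy₀ : y₀ ∈ Set.Ioo a b) (hpos : 0 < g y₀) :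
    0 < ∫ y in a..b, g y := by
  have hab : a < b := hy₀.1.trans hy₀.2
  rw [intervalIntegral.integral_of_le hab.le]
  rw [MeasureTheory.setIntegral_pos_iff_support_of_nonneg_ae
    ((MeasureTheory.ae_restrict_iff' measurableSet_Ioc).2
      (MeasureTheory.ae_of_all _ fun y hy => h0 y ⟨hy.1.le, hy.2⟩))
    (hg.integrableOn_Ioc)]
  have hopen : IsOpen (g ⁻¹' Set.Ioi 0 ∩ Set.Ioo a b) :=
    (isOpen_Ioi.preimage hg).inter isOpen_Ioo
  have hne : (g ⁻¹' Set.Ioi 0 ∩ Set.Ioo a b).Nonempty := ⟨y₀, hpos, hy₀⟩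
  calc (0 : ENNReal) < MeasureTheory.volume (g ⁻¹' Set.Ioi 0 ∩ Set.Ioo a b) :=
        hopen.measure_pos _ hne
    _ ≤ MeasureTheory.volume (Function.support g ∩ Set.Ioc a b) := by
        apply MeasureTheory.measure_mono
        rintro y ⟨hy1, hy2⟩
        exact ⟨ne_of_gt hy1, hy2.1, hy2.2.le⟩

lemma aux_deriv_nonneg {f : ℝ → ℝ} {a b x : ℝ} (hf : DifferentiableAt ℝ f x)
    (hm : MonotoneOn f (Set.Icc a b)) (hx : x ∈ Set.Ioo a b) : 0 ≤ deriv f x := by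
  have h := hf.hasDerivAt
  rw [hasDerivAt_iff_tendsto_slope] at h
  refine ge_of_tendsto h ?_
  have hmem : Set.Ioo a b ∈ nhdsWithin x {x}ᶜ :=
    nhdsWithin_le_nhds (isOpen_Ioo.mem_nhds hx)
  filter_upwards [hmem, self_mem_nhdsWithin] with y hy hyx
  have hxm : x ∈ Set.Icc a b := ⟨hx.1.le, hx.2.le⟩
  have hym : y ∈ Set.Icc a b := ⟨hy.1.le, hy.2.le⟩
  rw [slope_def_field]
  rcases lt_or_gt_of_ne (hyx : y ≠ x) with h1 | h1
  · rw [← neg_div_neg_eq]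
    exact div_nonneg (neg_nonneg.2 (sub_nonpos.2 (hm hym hxm h1.le)))
      (neg_nonneg.2 (sub_nonpos.2 h1.le))
  · exact div_nonneg (sub_nonneg.2 (hm hxm hym h1.le)) (sub_nonneg.2 h1.le)

lemma aux_K_abs {K : ℝ → ℝ} (hKeven : ∀ x, K (-x) = K x) (t : ℝ) : K |t| = K t := by
  rcases abs_cases t with ⟨h, _⟩ | ⟨h, _⟩
  · rw [h]
  · rw [h, hKeven]

lemma aux_kernel_le {K : ℝ → ℝ} (hKper : Function.Periodic K (2 * π))
    (hKeven : ∀ x, K (-x) = K x) (hanti : AntitoneOn K (Set.Icc 0 π))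
    {x y : ℝ} (hx : x ∈ Set.Ioo (-π) 0) (hy : y ∈ Set.Icc 0 π) :
    K (x - y) ≤ K (x + y) := by
  obtain ⟨hx1, hx2⟩ := hx
  obtain ⟨hy1, hy2⟩ := hy
  rcases le_or_gt (y - x) π with h | h
  · have e1 : K (x - y) = K (y - x) := by
      have : x - y = -(y - x) := by ring
      rw [this, hKeven]
    have h1 : |x + y| ≤ y - x := abs_le.2 ⟨by linarith, by linarith⟩
    have := hanti (Set.mem_Icc.2 ⟨abs_nonneg _, h1.trans h⟩)
      (Set.mem_Icc.2 ⟨by linarith, h⟩) h1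
    rw [aux_K_abs hKeven] at this
    linarith [e1 ▸ this]
  · have e1 : K (x - y) = K (x - y + 2 * π) := (hKper (x - y)).symm
    have h1 : |x + y| ≤ x - y + 2 * π := abs_le.2 ⟨by linarith, by linarith⟩
    have := hanti (Set.mem_Icc.2 ⟨abs_nonneg _, by linarith⟩)
      (Set.mem_Icc.2 ⟨by linarith, by linarith⟩) h1
    rw [aux_K_abs hKeven] at this
    linarith [e1 ▸ this]

lemma aux_kernel_lt {K : ℝ → ℝ} (hKper : Function.Periodic K (2 * π))
    (hKeven : ∀ x, K (-x) = K x) (hanti : StrictAntiOn K (Set.Icc 0 π))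
    {x y : ℝ} (hx : x ∈ Set.Ioo (-π) 0) (hy : y ∈ Set.Ioo 0 π) :
    K (x - y) < K (x + y) := by
  obtain ⟨hx1, hx2⟩ := hx
  obtain ⟨hy1, hy2⟩ := hy
  rcases le_or_gt (y - x) π with h | h
  · have e1 : K (x - y) = K (y - x) := by
      have : x - y = -(y - x) := by ring
      rw [this, hKeven]
    have h1 : |x + y| < y - x := abs_lt.2 ⟨by linarith, by linarith⟩
    have := hanti (Set.mem_Icc.2 ⟨abs_nonneg _, (h1.le).trans h⟩)
      (Set.mem_Icc.2 ⟨by linarith, h⟩) h1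
    rw [aux_K_abs hKeven] at this
    linarith [e1 ▸ this]
  · have e1 : K (x - y) = K (x - y + 2 * π) := (hKper (x - y)).symm
    have h1 : |x + y| < x - y + 2 * π := abs_lt.2 ⟨by linarith, by linarith⟩
    have := hanti (Set.mem_Icc.2 ⟨abs_nonneg _, by linarith⟩)
      (Set.mem_Icc.2 ⟨by linarith, by linarith⟩) h1
    rw [aux_K_abs hKeven] at this
    linarith [e1 ▸ this]

/-- Let `μ > 0`, `K` a continuous, even, `2π`-periodic kernel,
differentiable with `K' < 0` on `(0,π)`, and `φ` a nontrivial even `2π`-periodic `C¹`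
function with zero mean, nondecreasing on `(-π,0)`, satisfying
`(μ - φ) φ' = K * φ'`. Then `φ' > 0` on `(-π, 0)`. -/
theorem stmt14 (μ : ℝ) (hμ : 0 < μ) (K φ : ℝ → ℝ)
    (hKcont : Continuous K) (hKper : Function.Periodic K (2 * π))
    (hKeven : ∀ x, K (-x) = K x)
    (hKdiff : ∀ x ∈ Set.Ioo (0 : ℝ) π, DifferentiableAt ℝ K x)
    (hKdec : ∀ x ∈ Set.Ioo (0 : ℝ) π, deriv K x < 0)
    (hφC1 : ContDiff ℝ 1 φ) (hφper : Function.Periodic φ (2 * π))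
    (hφeven : ∀ x, φ (-x) = φ x)
    (hφmean : (∫ x in (-π)..π, φ x) = 0)
    (hφmono : MonotoneOn φ (Set.Icc (-π) 0))
    (hφnontriv : ∃ x, φ x ≠ 0)
    (heq : ∀ x : ℝ, (μ - φ x) * deriv φ x = ∫ y in (-π)..π, K (x - y) * deriv φ y) :
    ∀ x ∈ Set.Ioo (-π) (0 : ℝ), 0 < deriv φ x := by
  have hπ := Real.pi_pos
  set f := deriv φ with hfdef
  have hφd : Differentiable ℝ φ := hφC1.differentiable one_ne_zero
  have hfc : Continuous f := hφC1.continuous_deriv le_rfl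
  -- f is odd
  have hfodd : ∀ y, f (-y) = - f y := by
    intro y
    have h1 : deriv (fun z => φ (-z)) y = - deriv φ (-y) := deriv_comp_neg φ y
    have h2 : (fun z => φ (-z)) = φ := funext hφeven
    rw [h2] at h1
    rw [hfdef]
    linarith
  -- f is periodic
  have hfper : Function.Periodic f (2 * π) := by
    intro y
    have h1 : deriv (fun z => φ (z + 2 * π)) y = deriv φ (y + 2 * π) :=
      deriv_comp_add_const φ (2 * π) y
    have h2 : (fun z => φ (z + 2 * π)) = φ := funext fun z => hφper z
    rw [h2] at h1
    exact h1.symm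
  -- f ≥ 0 on (-π, 0)
  have hfnn : ∀ z ∈ Set.Ioo (-π) (0 : ℝ), 0 ≤ f z := fun z hz =>
    aux_deriv_nonneg (hφd z) hφmono hz
  -- f ≤ 0 on (0, π)
  have hfnp : ∀ z ∈ Set.Ioo (0 : ℝ) π, f z ≤ 0 := by
    intro z hz
    have h1 := hfodd z
    have h2 : 0 ≤ f (-z) := hfnn (-z) ⟨by linarith [hz.2], by linarith [hz.1]⟩
    linarith
  -- some point with f < 0 in (0, π)
  have hfex : ∃ y₀ ∈ Set.Ioo (0 : ℝ) π, f y₀ < 0 := by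
    by_contra hcon
    push_neg at hcon
    have hzero : ∀ z ∈ Set.Ioo (0 : ℝ) π, f z = 0 := fun z hz =>
      le_antisymm (hfnp z hz) (hcon z hz)
    have hfpi : f π = 0 := by
      have h1 : f (-π + 2 * π) = f (-π) := hfper (-π)
      have h2 : f (-π) = - f π := hfodd π
      have h3 : (-π + 2 * π) = π := by ring
      rw [h3] at h1
      linarith
    have hf0 : f 0 = 0 := by
      have := hfodd 0
      simp only [neg_zero] at this
      linarith
    have hIcoz : ∀ z ∈ Set.Ico (-π) π, f z = 0 := by
      intro z hz
      rcases eq_or_lt_of_le hz.1 with he | he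
      · rw [← he]
        have h2 := hfodd π
        linarith
      rcases lt_trichotomy z 0 with h | h | h
      · have h1 : f (-z) = 0 := hzero (-z) ⟨by linarith, by linarith⟩
        have h2 := hfodd z
        linarith
      · rw [h]; exact hf0
      · exact hzero z ⟨h, hz.2⟩
    have hall : ∀ z, f z = 0 := by
      intro z
      obtain ⟨y, hy, hyz⟩ := hfper.exists_mem_Ico (by linarith) z (-π)
      have h3 : -π + 2 * π = π := by ring
      rw [h3] at hy
      rw [hyz]
      exact hIcoz y hy
    have hconst : ∀ z, φ z = φ 0 := fun z => is_const_of_deriv_eq_zero hφd hall z 0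
    have hmean2 : (∫ x in (-π)..π, φ x) = (2 * π) * φ 0 := by
      have : (∫ x in (-π)..π, φ x) = ∫ x in (-π)..π, φ 0 := by
        apply intervalIntegral.integral_congr
        intro t _
        exact hconst t
      rw [this, intervalIntegral.integral_const, smul_eq_mul]
      ring
    have hφ0 : φ 0 = 0 := by
      rw [hmean2] at hφmean
      have h2π : (0 : ℝ) < 2 * π := by linarith
      exact (mul_eq_zero.1 hφmean).resolve_left (ne_of_gt h2π)
    obtain ⟨w, hw⟩ := hφnontriv
    exact hw ((hconst w).trans hφ0)
  obtain ⟨y₀, hy₀, hfy₀⟩ := hfex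
  -- K is strictly decreasing on [0, π]
  have hanti : StrictAntiOn K (Set.Icc 0 π) := by
    apply strictAntiOn_of_deriv_neg (convex_Icc 0 π) hKcont.continuousOn
    intro z hz
    rw [interior_Icc] at hz
    exact hKdec z hz
  intro x hx
  -- convolution rewritten over (0, π)
  have hint1 : IntervalIntegrable (fun y => K (x - y) * f y) MeasureTheory.volume (-π) 0 :=
    ((hKcont.comp (continuous_const.sub continuous_id)).mul hfc).intervalIntegrable _ _
  have hint2 : IntervalIntegrable (fun y => K (x - y) * f y) MeasureTheory.volume 0 π :=
    ((hKcont.comp (continuous_const.sub continuous_id)).mul hfc).intervalIntegrable _ _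
  have hsplit : (∫ y in (-π)..π, K (x - y) * f y)
      = (∫ y in (-π)..(0:ℝ), K (x - y) * f y) + ∫ y in (0:ℝ)..π, K (x - y) * f y :=
    (intervalIntegral.integral_add_adjacent_intervals hint1 hint2).symm
  have hneg : (∫ y in (-π)..(0:ℝ), K (x - y) * f y)
      = - ∫ y in (0:ℝ)..π, K (x + y) * f y := by
    have h1 : (∫ y in (0:ℝ)..π, (fun t => K (x - t) * f t) (-y))
        = ∫ y in (-π)..(0:ℝ), K (x - y) * f y := by
      rw [intervalIntegral.integral_comp_neg (fun t => K (x - t) * f t)]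
      norm_num
    rw [← h1]
    have h2 : ∀ y, (fun t => K (x - t) * f t) (-y) = - (K (x + y) * f y) := by
      intro y
      simp only [sub_neg_eq_add, hfodd]
      ring
    simp_rw [h2]
    rw [intervalIntegral.integral_neg]
  have hcomb : (∫ y in (-π)..π, K (x - y) * f y)
      = ∫ y in (0:ℝ)..π, (K (x - y) - K (x + y)) * f y := by
    rw [hsplit, hneg]
    rw [eq_comm]
    have hi1 : IntervalIntegrable (fun y => K (x - y) * f y) MeasureTheory.volume 0 π := hint2
    have hi2 : IntervalIntegrable (fun y => K (x + y) * f y) MeasureTheory.volume 0 π :=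
      ((hKcont.comp (continuous_const.add continuous_id)).mul hfc).intervalIntegrable _ _
    have : (∫ y in (0:ℝ)..π, (K (x - y) - K (x + y)) * f y)
        = (∫ y in (0:ℝ)..π, K (x - y) * f y) - ∫ y in (0:ℝ)..π, K (x + y) * f y := by
      rw [← intervalIntegral.integral_sub hi1 hi2]
      apply intervalIntegral.integral_congr
      intro t _
      ring
    rw [this]
    ring
  -- the transformed integrand is nonneg and positive at y₀
  have hgc : Continuous (fun y => (K (x - y) - K (x + y)) * f y) :=
    (((hKcont.comp (continuous_const.sub continuous_id)).sub
      (hKcont.comp (continuous_const.add continuous_id))).mul hfc)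
  have hgnn : ∀ y ∈ Set.Icc (0:ℝ) π, 0 ≤ (K (x - y) - K (x + y)) * f y := by
    intro y hy
    rcases eq_or_lt_of_le hy.1 with h | h
    · have : f 0 = 0 := by
        have := hfodd 0
        simp only [neg_zero] at this
        linarith
      rw [← h, this, mul_zero]
    · have hK := aux_kernel_le hKper hKeven hanti.antitoneOn hx hy
      rcases eq_or_lt_of_le hy.2 with h2 | h2
      · have : f π ≤ 0 := by
          have h1 : f (-π + 2 * π) = f (-π) := hfper (-π)
          have hodd := hfodd π
          have h3 : (-π + 2 * π) = π := by ring
          rw [h3] at h1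
          -- f π = f (-π) = -f π hence f π = 0
          have : f π = 0 := by linarith
          linarith
        rw [h2]
        subst h2
        nlinarith [hK, this]
      · nlinarith [hK, hfnp y ⟨h, h2⟩]
  have hgpos : 0 < (K (x - y₀) - K (x + y₀)) * f y₀ := by
    have hK := aux_kernel_lt hKper hKeven hanti hx hy₀
    exact mul_pos_of_neg_of_neg (by linarith) hfy₀
  have hIpos : 0 < ∫ y in (0:ℝ)..π, (K (x - y) - K (x + y)) * f y :=
    aux_integral_pos hgc hgnn hy₀ hgpos
  -- conclude
  have hmain : 0 < (μ - φ x) * f x := by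
    rw [heq x, hcomb]
    exact hIpos
  have hfx : 0 ≤ f x := hfnn x hx
  rcases eq_or_lt_of_le hfx with h | h
  · rw [← h, mul_zero] at hmain
    exact absurd hmain (lt_irrefl 0)
  · exact h
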